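/- arXiv:2007.14581 — 2 statements merged into one kernel-verified Lean document; each statement's English description precedes it below -/
import Mathlib

section
/- For square matrices W^{[0]}, ..., W^{[L-1]} evolving under the gradient flow dW^{[l]}/dt = -∂R/∂W^{[l]} of a differentiable loss R(W) depending only on the product W = W^{[L-1]}···W^{[0]}, the balancedness condition (W^{[l+1]})^T W^{[l+1]} = W^{[l]} (W^{[l]})^T is preserved for all time if it holds at initialization, since d/dt[(W^{[l+1]})^T W^{[l+1]} - W^{[l]}(W^{[l]})^T] = 0. -/
open Matrix

/-- Product `W^{[L-1]} ⋯ W^{[l+1]}` of the factors strictly above layer `l`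
(in descending order). -/
def prodAbove {d L : ℕ} (W : Fin L → Matrix (Fin d) (Fin d) ℝ) (l : Fin L) :
    Matrix (Fin d) (Fin d) ℝ :=
  (((List.finRange L).reverse.filter (fun k => l < k)).map W).prod

/-- Product `W^{[l-1]} ⋯ W^{[0]}` of the factors strictly below layer `l`
(in descending order). -/
def prodBelow {d L : ℕ} (W : Fin L → Matrix (Fin d) (Fin d) ℝ) (l : Fin L) :
    Matrix (Fin d) (Fin d) ℝ :=
  (((List.finRange L).reverse.filter (fun k => k < l)).map W).prod

/-- The full product `W^{[L-1]} ⋯ W^{[0]}`. -/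
def prodAll {d L : ℕ} (W : Fin L → Matrix (Fin d) (Fin d) ℝ) :
    Matrix (Fin d) (Fin d) ℝ :=
  (((List.finRange L).reverse).map W).prod

/-- Extension of `W` to all of `ℕ` by the identity matrix. -/
def Wext {d L : ℕ} (W : Fin L → Matrix (Fin d) (Fin d) ℝ) (k : ℕ) :
    Matrix (Fin d) (Fin d) ℝ :=
  if h : k < L then W ⟨k, h⟩ else 1

lemma map_filter_eq {d L : ℕ} (W : Fin L → Matrix (Fin d) (Fin d) ℝ)
    (p : Fin L → Bool) (q : ℕ → Bool) (hpq : ∀ k : Fin L, p k = q k.val) :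
    ∀ s : List (Fin L),
      (s.filter p).map W = ((s.map Fin.val).filter q).map (Wext W) := by
  intro s
  induction s with
  | nil => simp
  | cons a s ih =>
    rw [List.map_cons, List.filter_cons, List.filter_cons, ← hpq a]
    by_cases h : p a = true
    · simp only [h, ite_true, List.map_cons, ih]
      congr 1
      simp [Wext, a.isLt]
    · simp only [eq_false_of_ne_true h, Bool.false_eq_true, ite_false, ih]

lemma filter_lt_nat (L m : ℕ) (h : m < L) :
    ((List.range L).reverse.filter (fun k => decide (k < m+1))) =
      m :: ((List.range L).reverse.filter (fun k => decide (k < m))) := by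
  induction L with
  | zero => omega
  | succ n ih =>
    rw [List.range_succ, List.reverse_append, List.reverse_singleton,
      List.singleton_append, List.filter_cons, List.filter_cons]
    by_cases hm : m = n
    · subst hm
      simp only [decide_eq_true_eq, Nat.lt_succ_self, if_pos, lt_irrefl, if_neg,
        Nat.lt_irrefl, decide_true, decide_false, Bool.false_eq_true, ite_false, ite_true]
      congr 1
      rw [List.filter_eq_self.mpr, List.filter_eq_self.mpr] <;>
        · intro a ha
          simp only [List.mem_reverse, List.mem_range] at ha
          simpa using by omega
    · have hm' : m < n := by omega
      have h1 : ¬ (n < m + 1) := by omega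
      have h2 : ¬ (n < m) := by omega
      simp only [h1, h2, decide_false, Bool.false_eq_true, ite_false, decide_eq_true_eq,
        if_neg]
      exact ih hm'

lemma filter_gt_nat (L m : ℕ) (h : m + 1 < L) :
    ((List.range L).reverse.filter (fun k => decide (m < k))) =
      ((List.range L).reverse.filter (fun k => decide (m+1 < k))) ++ [m+1] := by
  induction L with
  | zero => omega
  | succ n ih =>
    rw [List.range_succ, List.reverse_append, List.reverse_singleton,
      List.singleton_append, List.filter_cons, List.filter_cons]
    by_cases hm : m + 1 = n
    · subst hm
      have h1 : m < m + 1 := Nat.lt_succ_self m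
      have h2 : ¬ (m + 1 < m + 1) := lt_irrefl _
      simp only [h1, h2, decide_true, decide_false, Bool.false_eq_true, ite_true, ite_false,
        decide_eq_true_eq, if_pos, if_neg]
      rw [List.filter_eq_nil_iff.mpr, List.filter_eq_nil_iff.mpr]
      · simp
      · intro a ha
        simp only [List.mem_reverse, List.mem_range] at ha
        simpa using by omega
      · intro a ha
        simp only [List.mem_reverse, List.mem_range] at ha
        simpa using by omega
    · have hm' : m + 1 < n := by omega
      have h1 : m < n := by omega
      have h2 : m + 1 < n := hm'
      simp only [h1, h2, decide_true, if_pos, decide_eq_true_eq, ite_true]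
      rw [ih hm', List.cons_append]

lemma prodBelow_eq_nat {d L : ℕ} (W : Fin L → Matrix (Fin d) (Fin d) ℝ) (l : Fin L) :
    prodBelow W l =
      (((List.range L).reverse.filter (fun k => decide (k < (l:ℕ)))).map (Wext W)).prod := by
  rw [prodBelow, map_filter_eq W _ (fun k => decide (k < (l:ℕ)))
    (fun k => decide_eq_decide.mpr Fin.lt_def), List.map_reverse,
    show (List.finRange L).map Fin.val = List.range L from List.ext_getElem (by simp) (by simp)]

lemma prodAbove_eq_nat {d L : ℕ} (W : Fin L → Matrix (Fin d) (Fin d) ℝ) (l : Fin L) :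
    prodAbove W l =
      (((List.range L).reverse.filter (fun k => decide ((l:ℕ) < k))).map (Wext W)).prod := by
  rw [prodAbove, map_filter_eq W _ (fun k => decide ((l:ℕ) < k))
    (fun k => decide_eq_decide.mpr Fin.lt_def), List.map_reverse,
    show (List.finRange L).map Fin.val = List.range L from List.ext_getElem (by simp) (by simp)]

lemma prodBelow_step {d L : ℕ} (W : Fin L → Matrix (Fin d) (Fin d) ℝ) (l : Fin L)
    (hl : (l:ℕ) + 1 < L) :
    prodBelow W ⟨(l:ℕ)+1, hl⟩ = W l * prodBelow W l := by
  rw [prodBelow_eq_nat, prodBelow_eq_nat]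
  rw [show (((⟨(l:ℕ)+1, hl⟩ : Fin L) : ℕ)) = (l:ℕ)+1 from rfl,
    filter_lt_nat L l l.isLt, List.map_cons, List.prod_cons]
  congr 1
  simp [Wext, l.isLt]

lemma prodAbove_step {d L : ℕ} (W : Fin L → Matrix (Fin d) (Fin d) ℝ) (l : Fin L)
    (hl : (l:ℕ) + 1 < L) :
    prodAbove W l = prodAbove W ⟨(l:ℕ)+1, hl⟩ * W ⟨(l:ℕ)+1, hl⟩ := by
  rw [prodAbove_eq_nat, prodAbove_eq_nat]
  rw [show (((⟨(l:ℕ)+1, hl⟩ : Fin L) : ℕ)) = (l:ℕ)+1 from rfl,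
    filter_gt_nat L l hl, List.map_append, List.prod_append]
  congr 1
  simp [Wext, hl]

/-- Under the gradient flow `dW^{[l]}/dt = -∂R/∂W^{[l]}`, where
`∂R/∂W^{[l]} = (W^{[L-1]}⋯W^{[l+1]})ᵀ (∇_W R) (W^{[l-1]}⋯W^{[0]})ᵀ` with
`∇_W R` evaluated at the product matrix, the balancedness condition
`(W^{[l+1]})ᵀ W^{[l+1]} = W^{[l]} (W^{[l]})ᵀ` is preserved for all time if it
holds at initialization. -/
theorem balancedness_preserved (d L : ℕ)
    (W : Fin L → ℝ → Matrix (Fin d) (Fin d) ℝ)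
    (G : Matrix (Fin d) (Fin d) ℝ → Matrix (Fin d) (Fin d) ℝ)  -- ∇_W R
    (hflow : ∀ (l : Fin L) (t : ℝ) (i j : Fin d),
      HasDerivAt (fun s => W l s i j)
        (-(((prodAbove (fun k => W k t) l)ᵀ * G (prodAll (fun k => W k t)) *
            (prodBelow (fun k => W k t) l)ᵀ) i j)) t)
    (hbal0 : ∀ (l : Fin L) (hl : (l : ℕ) + 1 < L),
      (W ⟨(l : ℕ) + 1, hl⟩ 0)ᵀ * W ⟨(l : ℕ) + 1, hl⟩ 0 = W l 0 * (W l 0)ᵀ) :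
    ∀ (t : ℝ) (l : Fin L) (hl : (l : ℕ) + 1 < L),
      (W ⟨(l : ℕ) + 1, hl⟩ t)ᵀ * W ⟨(l : ℕ) + 1, hl⟩ t = W l t * (W l t)ᵀ := by
  intro t l hl
  set l' : Fin L := ⟨(l:ℕ)+1, hl⟩ with hl'def
  -- gradient matrices at time s
  set M : ℝ → Matrix (Fin d) (Fin d) ℝ := fun s =>
    (prodAbove (fun k => W k s) l')ᵀ * G (prodAll (fun k => W k s)) *
      (prodBelow (fun k => W k s) l')ᵀ with hM
  set N : ℝ → Matrix (Fin d) (Fin d) ℝ := fun s =>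
    (prodAbove (fun k => W k s) l)ᵀ * G (prodAll (fun k => W k s)) *
      (prodBelow (fun k => W k s) l)ᵀ with hN
  -- the key algebraic identity
  have key : ∀ s : ℝ, (W l' s)ᵀ * M s = N s * (W l s)ᵀ := by
    intro s
    have hA : prodAbove (fun k => W k s) l = prodAbove (fun k => W k s) l' * W l' s :=
      prodAbove_step _ l hl
    have hB : prodBelow (fun k => W k s) l' = W l s * prodBelow (fun k => W k s) l :=
      prodBelow_step _ l hl
    rw [hM, hN]
    simp only [hA, hB, transpose_mul]
    noncomm_ring
  have keyab : ∀ (s : ℝ) (a b : Fin d),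
      (∑ k, W l' s k a * M s k b) = ∑ k, N s a k * W l s b k := by
    intro s a b
    have h := congrFun (congrFun (key s) a) b
    simpa [Matrix.mul_apply, Matrix.transpose_apply] using h
  -- each entry of the difference has zero derivative everywhere
  have hderiv : ∀ (s : ℝ) (i j : Fin d),
      HasDerivAt (fun u => ((W l' u)ᵀ * W l' u - W l u * (W l u)ᵀ) i j) 0 s := by
    intro s i j
    have h1 : HasDerivAt (fun u => ∑ k, W l' u k i * W l' u k j)
        (∑ k, (-(M s k i) * W l' s k j + W l' s k i * -(M s k j))) s :=
      HasDerivAt.fun_sum fun k _ => (hflow l' s k i).mul (hflow l' s k j)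
    have h2 : HasDerivAt (fun u => ∑ k, W l u i k * W l u j k)
        (∑ k, (-(N s i k) * W l s j k + W l s i k * -(N s j k))) s :=
      HasDerivAt.fun_sum fun k _ => (hflow l s i k).mul (hflow l s j k)
    have h := h1.sub h2
    have hfun : (fun u => ((W l' u)ᵀ * W l' u - W l u * (W l u)ᵀ) i j) =
        fun u => (∑ k, W l' u k i * W l' u k j) - ∑ k, W l u i k * W l u j k := by
      funext u
      simp [Matrix.sub_apply, Matrix.mul_apply, Matrix.transpose_apply]
    rw [hfun]
    have hS1 : (∑ k, M s k i * W l' s k j) = ∑ k, W l s i k * N s j k := by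
      rw [Finset.sum_congr rfl (fun k _ => mul_comm (M s k i) (W l' s k j)), keyab s j i]
      exact Finset.sum_congr rfl fun k _ => mul_comm _ _
    have hS2 : (∑ k, W l' s k i * M s k j) = ∑ k, N s i k * W l s j k := keyab s i j
    have hzero : (∑ k, (-(M s k i) * W l' s k j + W l' s k i * -(M s k j))) -
        (∑ k, (-(N s i k) * W l s j k + W l s i k * -(N s j k))) = 0 := by
      simp only [neg_mul, mul_neg, neg_add_rev, Finset.sum_add_distrib, Finset.sum_neg_distrib]
      linarith [hS1, hS2]
    rw [← hzero]
    exact h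
  -- constancy of each entry
  have hconst : ∀ i j : Fin d,
      ((W l' t)ᵀ * W l' t - W l t * (W l t)ᵀ) i j =
        ((W l' 0)ᵀ * W l' 0 - W l 0 * (W l 0)ᵀ) i j := by
    intro i j
    exact is_const_of_deriv_eq_zero
      (fun x => (hderiv x i j).differentiableAt)
      (fun x => (hderiv x i j).deriv) t 0
  have hsub : (W l' t)ᵀ * W l' t - W l t * (W l t)ᵀ = 0 := by
    ext i j
    rw [Matrix.zero_apply, hconst i j]
    have h0 := hbal0 l hl
    rw [show W ⟨(l:ℕ)+1, hl⟩ 0 = W l' 0 from rfl] at h0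
    rw [Matrix.sub_apply, h0, sub_self]
  have := sub_eq_zero.mp hsub
  exact this
end

section
/- If square matrices W^{[0]}, ..., W^{[L-1]} satisfy the balancedness condition (W^{[l+1]})^T W^{[l+1]} = W^{[l]}(W^{[l]})^T for l = 0, ..., L-2, then all factors have the same singular values, and the singular values of the product W = W^{[L-1]}···W^{[0]} are the L-th powers of the common singular values of the factors. -/
open Matrix Polynomial

private lemma det_smul_one_sub_mul_comm {d : ℕ} {R : Type*} [CommRing R] [IsDomain R]
    (x : R) (hx : x ≠ 0) (A B : Matrix (Fin d) (Fin d) R) :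
    (x • 1 - A * B).det = (x • 1 - B * A).det := by
  set M : Matrix (Fin d ⊕ Fin d) (Fin d ⊕ Fin d) R := fromBlocks 1 A B (x • 1) with hM
  have h1 : M.det = (x • 1 - B * A).det := by
    have e : (fromBlocks 1 0 (-B) 1) * M = fromBlocks 1 A 0 (x • 1 - B * A) := by
      rw [hM, fromBlocks_multiply]
      congr 1 <;> simp [Matrix.neg_mul, sub_eq_add_neg, add_comm]
    have := congrArg Matrix.det e
    rw [det_mul, det_fromBlocks_zero₁₂, det_fromBlocks_zero₂₁] at this
    simpa using this
  have h2 : M.det * x ^ d = (x • 1 - A * B).det * x ^ d := by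
    have e : M * (fromBlocks (x • 1) 0 (-B) 1) = fromBlocks (x • 1 - A * B) A 0 (x • 1) := by
      rw [hM, fromBlocks_multiply]
      congr 1 <;>
        simp [Matrix.mul_smul, Matrix.smul_mul, Matrix.mul_neg, sub_eq_add_neg, add_comm]
    have := congrArg Matrix.det e
    rw [det_mul, det_fromBlocks_zero₁₂, det_fromBlocks_zero₂₁] at this
    have hdx : (x • (1 : Matrix (Fin d) (Fin d) R)).det = x ^ d := by
      simp [Matrix.det_smul]
    rw [hdx] at this
    simpa [mul_comm, mul_assoc] using this
  have hx' : x ^ d ≠ 0 := pow_ne_zero _ hx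
  have h3 := mul_right_cancel₀ hx' h2
  rw [← h3, h1]

private lemma charpoly_mul_comm' {d : ℕ} (A B : Matrix (Fin d) (Fin d) ℝ) :
    (A * B).charpoly = (B * A).charpoly := by
  have hscal : Matrix.scalar (Fin d) (X : ℝ[X]) = (X : ℝ[X]) • (1 : Matrix (Fin d) (Fin d) ℝ[X]) := by
    ext i j
    by_cases h : i = j <;>
      simp [Matrix.scalar_apply, Matrix.diagonal, Matrix.one_apply, h]
  have hchar : ∀ M N : Matrix (Fin d) (Fin d) ℝ,
      charmatrix (M * N) = (X : ℝ[X]) • 1 - (M.map C) * (N.map C) := by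
    intro M N
    rw [charmatrix, hscal]
    congr 1
    simp [RingHom.mapMatrix_apply, Matrix.map_mul]
  unfold Matrix.charpoly
  rw [hchar, hchar]
  exact det_smul_one_sub_mul_comm (X : ℝ[X]) Polynomial.X_ne_zero _ _

/-- Under balancedness, all factors have the same singular values (same
characteristic polynomial of `WᵀW`), and the singular values of the product are
the `L`-th powers of the common singular values of the factors (encoded via the
characteristic polynomial of `(W^{[0]}ᵀ W^{[0]})^L`). -/
theorem balanced_singular_values (d L : ℕ) (hL : 0 < L)
    (W : Fin L → Matrix (Fin d) (Fin d) ℝ)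
    (hbal : ∀ (l : Fin L) (hl : (l : ℕ) + 1 < L),
      (W ⟨(l : ℕ) + 1, hl⟩)ᵀ * W ⟨(l : ℕ) + 1, hl⟩ = W l * (W l)ᵀ) :
    (∀ l : Fin L, ((W l)ᵀ * W l).charpoly = ((W ⟨0, hL⟩)ᵀ * W ⟨0, hL⟩).charpoly) ∧
    ((prodAll W)ᵀ * prodAll W).charpoly = (((W ⟨0, hL⟩)ᵀ * W ⟨0, hL⟩) ^ L).charpoly := by
  classical
  set B0 : Matrix (Fin d) (Fin d) ℝ := (W ⟨0, hL⟩)ᵀ * W ⟨0, hL⟩ with hB0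
  -- Part 1
  have h1 : ∀ (k : ℕ) (h : k < L), ((W ⟨k, h⟩)ᵀ * W ⟨k, h⟩).charpoly = B0.charpoly := by
    intro k
    induction k with
    | zero => intro h; rfl
    | succ k ih =>
      intro h
      have hk : k < L := Nat.lt_of_succ_lt h
      have hb := hbal ⟨k, hk⟩ h
      rw [hb, _root_.charpoly_mul_comm' (W ⟨k, hk⟩) (W ⟨k, hk⟩)ᵀ, ih hk]
  -- Partial products
  let f : ℕ → Matrix (Fin d) (Fin d) ℝ := fun i => if h : i < L then W ⟨i, h⟩ else 1
  let P : ℕ → Matrix (Fin d) (Fin d) ℝ := fun k => (((List.range k).reverse).map f).prod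
  have hf : ∀ (i : ℕ) (h : i < L), f i = W ⟨i, h⟩ := fun i h => dif_pos h
  have hPsucc : ∀ k, P (k + 1) = f k * P k := by
    intro k
    simp [P, List.range_succ]
  have hinter : ∀ (k : ℕ), k < L → P k * B0 = (f k)ᵀ * f k * P k := by
    intro k
    induction k with
    | zero =>
      intro h
      simp [P, hf 0 h, hB0]
    | succ k ih =>
      intro h
      have hk : k < L := Nat.lt_of_succ_lt h
      have hb := hbal ⟨k, hk⟩ h
      rw [hPsucc, mul_assoc, ih hk, hf k hk, hf (k + 1) h]
      have : W ⟨k, hk⟩ * ((W ⟨k, hk⟩)ᵀ * W ⟨k, hk⟩ * P k)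
          = (W ⟨k, hk⟩ * (W ⟨k, hk⟩)ᵀ) * (W ⟨k, hk⟩ * P k) := by
        simp [mul_assoc]
      rw [this, ← hb]
  have hmain : ∀ (k : ℕ), k ≤ L → (P k)ᵀ * P k = B0 ^ k := by
    intro k
    induction k with
    | zero => intro _; simp [P]
    | succ k ih =>
      intro h
      have hk : k < L := h
      rw [hPsucc, Matrix.transpose_mul]
      calc (P k)ᵀ * (f k)ᵀ * (f k * P k)
          = (P k)ᵀ * ((f k)ᵀ * f k * P k) := by simp [mul_assoc]
        _ = (P k)ᵀ * (P k * B0) := by rw [← hinter k hk]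
        _ = (P k)ᵀ * P k * B0 := by rw [mul_assoc]
        _ = B0 ^ k * B0 := by rw [ih (Nat.le_of_lt hk)]
        _ = B0 ^ (k + 1) := by rw [pow_succ]
  have hprod : prodAll W = P L := by
    unfold prodAll
    congr 1
    rw [List.map_reverse, List.map_reverse]
    congr 1
    have : (List.range L).map f = (List.finRange L).map W := by
      rw [← List.map_coe_finRange_eq_range, List.map_map]
      apply List.map_congr_left
      intro i _
      simp [Function.comp, hf i.val i.isLt]
    rw [this]
  refine ⟨fun l => ?_, ?_⟩
  · have := h1 l.val l.isLt
    simpa using this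
  · rw [hprod, hmain L le_rfl]
end
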